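/- Let W be the group of signed permutations of {1,...,n} (the hyperoctahedral group B_n), and in Q[W] let x_j, for 0 <= j <= n, be the sum of all signed permutations w with w(i-1) < w(i) for all 1 <= i <= j (where w(0) = 0). Then for 0 <= k < n: x_{n-1} * x_{n-k} = 2k * x_{n-k} + x_{n-k-1}, and x_{n-1} * x_0 = 2n * x_0. -/

import Mathlib

open scoped Classical

/-- The hyperoctahedral group `B n` of signed permutations of `{1, ..., n}`: the element
`Sum.inl i` encodes the positive integer `i+1` and `Sum.inr i` encodes `-(i+1)`, and
`Sum.swap` is negation.  A signed permutation is a permutation `w` of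
`{±1, ..., ±n}` satisfying `w(-x) = -w(x)`. -/
def Bgroup (n : ℕ) : Subgroup (Equiv.Perm (Fin n ⊕ Fin n)) where
  carrier := {w | ∀ x, w x.swap = (w x).swap}
  one_mem' := by intro x; rfl
  mul_mem' := by
    intro a b ha hb x
    simp only [Equiv.Perm.mul_apply, hb x, ha (b x)]
  inv_mem' := by
    intro a ha x
    have h := ha (a⁻¹ x)
    rw [show a (a⁻¹ x) = x from a.apply_symm_apply x] at h
    rw [← h]
    exact a.symm_apply_apply _

/-- The integer value of a signed point: `Sum.inl i ↦ i+1`, `Sum.inr i ↦ -(i+1)`. -/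
def bval (n : ℕ) : Fin n ⊕ Fin n → ℤ :=
  Sum.elim (fun i => (i : ℤ) + 1) (fun i => -((i : ℤ) + 1))

/-- `w(i)` as an integer, for a signed permutation `w` and `1 ≤ i ≤ n`;
by convention `w(0) = 0` (and the value is `0` if `i` is out of range). -/
def bvalOf (n : ℕ) (w : Equiv.Perm (Fin n ⊕ Fin n)) (i : ℕ) : ℤ :=
  if h : 1 ≤ i ∧ i ≤ n then bval n (w (Sum.inl ⟨i - 1, by omega⟩)) else 0

/-- In the group algebra `ℚ[B_n]` of the hyperoctahedral group, `xB n j` is the sum of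
all signed permutations `w` with `0 = w(0) < w(1) < ... < w(j)`, i.e. the minimal-length
left coset representatives of the parabolic subgroup of type `B_j`. -/
noncomputable def xB (n j : ℕ) : MonoidAlgebra ℚ (Bgroup n) :=
  ∑ w ∈ Finset.univ.filter
      (fun w : Bgroup n =>
        ∀ i : ℕ, 1 ≤ i → i ≤ j → bvalOf n (w : Equiv.Perm (Fin n ⊕ Fin n)) (i - 1) <
          bvalOf n (w : Equiv.Perm (Fin n ⊕ Fin n)) i),
    MonoidAlgebra.single w 1

namespace XBaux

variable {n : ℕ}

lemma bval_swap (x : Fin n ⊕ Fin n) : bval n x.swap = - bval n x := by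
  cases x <;> simp [bval]

lemma bval_injective : Function.Injective (bval n) := by
  rintro (i | i) (j | j) h <;> simp [bval] at h <;>
    first
    | (exact congrArg Sum.inl (Fin.ext (by omega)))
    | (exact congrArg Sum.inr (Fin.ext (by omega)))
    | omega

/-- absolute value index of a signed point -/
def babs : Fin n ⊕ Fin n → Fin n := Sum.elim id id

lemma babs_swap (x : Fin n ⊕ Fin n) : babs x.swap = babs x := by
  cases x <;> rfl

lemma natAbs_bval (x : Fin n ⊕ Fin n) : (bval n x).natAbs = (babs x : ℕ) + 1 := by
  cases x <;> simp [bval, babs] <;> omega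

lemma bval_le (x : Fin n ⊕ Fin n) : bval n x ≤ n ∧ -(n:ℤ) ≤ bval n x := by
  cases x with
  | inl i => have := i.isLt; constructor <;> simp [bval] <;> omega
  | inr i => have := i.isLt; constructor <;> simp [bval] <;> omega

lemma bval_ne_zero (x : Fin n ⊕ Fin n) : bval n x ≠ 0 := by
  cases x <;> simp [bval] <;> omega

lemma bval_lt_of_babs_ne (x : Fin n ⊕ Fin n) (h : (babs x : ℕ) ≠ n - 1) :
    bval n x < n ∧ -(n:ℤ) < bval n x := by
  cases x with
  | inl i => have := i.isLt; simp [bval, babs] at h ⊢ <;> omega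
  | inr i => have := i.isLt; simp [bval, babs] at h ⊢ <;> omega

lemma babs_eq_cases {x y : Fin n ⊕ Fin n} (h : babs x = babs y) :
    x = y ∨ x = y.swap := by
  cases x <;> cases y <;> simp [babs] at h <;> simp [h]

end XBaux
namespace XBaux
variable {n : ℕ}

lemma mem_Bgroup_iff {w : Equiv.Perm (Fin n ⊕ Fin n)} :
    w ∈ Bgroup n ↔ ∀ x, w x.swap = (w x).swap := Iff.rfl

lemma babs_w_injective {w : Equiv.Perm (Fin n ⊕ Fin n)} (hw : w ∈ Bgroup n) :
    Function.Injective (fun i : Fin n => babs (w (Sum.inl i))) := by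
  intro i j h
  simp only at h
  rcases babs_eq_cases h with h' | h'
  · simpa using w.injective h'
  · have h2 : w (Sum.inr j) = (w (Sum.inl j)).swap := mem_Bgroup_iff.mp hw (Sum.inl j)
    rw [← h2] at h'
    have := w.injective h'
    simp at this

/-- the increasing-chain condition used in `xB` -/
def cnd (n j : ℕ) (w : Equiv.Perm (Fin n ⊕ Fin n)) : Prop :=
  ∀ i : ℕ, 1 ≤ i → i ≤ j → bvalOf n w (i - 1) < bvalOf n w i

lemma xB_eq (n j : ℕ) :
    xB n j = ∑ w ∈ Finset.univ.filter (fun w : Bgroup n => cnd n j (w : Equiv.Perm (Fin n ⊕ Fin n))),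
      MonoidAlgebra.single w 1 := by
  rw [xB]
  congr 1
  apply Finset.filter_congr
  intro w _
  exact Iff.rfl

lemma bvalOf_zero (w : Equiv.Perm (Fin n ⊕ Fin n)) : bvalOf n w 0 = 0 := by
  simp [bvalOf]

lemma bvalOf_succ (w : Equiv.Perm (Fin n ⊕ Fin n)) {i : ℕ} (h : i < n) :
    bvalOf n w (i + 1) = bval n (w (Sum.inl ⟨i, h⟩)) := by
  rw [bvalOf, dif_pos ⟨by omega, by omega⟩]
  simp only [Nat.add_sub_cancel]

lemma cnd_iff {j : ℕ} {w : Equiv.Perm (Fin n ⊕ Fin n)} :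
    cnd n j w ↔ ∀ i : ℕ, i < j → bvalOf n w i < bvalOf n w (i + 1) := by
  constructor
  · intro h i hi
    have := h (i + 1) (by omega) (by omega)
    simpa using this
  · intro h i h1 h2
    have := h (i - 1) (by omega)
    have hi : i - 1 + 1 = i := by omega
    rwa [hi] at this

lemma cnd_chain {j : ℕ} {w : Equiv.Perm (Fin n ⊕ Fin n)} (h : cnd n j w) :
    ∀ i1 i2 : ℕ, i1 < i2 → i2 ≤ j → bvalOf n w i1 < bvalOf n w i2 := by
  intro i1 i2
  induction i2 with
  | zero => omega
  | succ m ih =>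
    intro h1 h2
    rcases Nat.lt_or_ge i1 m with hm | hm
    · exact lt_trans (ih hm (by omega)) (cnd_iff.mp h m (by omega))
    · have : i1 = m := by omega
      subst this
      exact cnd_iff.mp h i1 (by omega)

lemma cnd_pos {j : ℕ} {w : Equiv.Perm (Fin n ⊕ Fin n)} (h : cnd n j w)
    {i : ℕ} (h1 : 1 ≤ i) (h2 : i ≤ j) : 0 < bvalOf n w i := by
  have := cnd_chain h 0 i (by omega) h2
  rwa [bvalOf_zero] at this

lemma cnd_mono {j j' : ℕ} (hjj : j' ≤ j) {w : Equiv.Perm (Fin n ⊕ Fin n)} (h : cnd n j w) :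
    cnd n j' w := fun i h1 h2 => h i h1 (le_trans h2 hjj)

lemma cnd_zero (w : Equiv.Perm (Fin n ⊕ Fin n)) : cnd n 0 w := by
  intro i h1 h2; omega

end XBaux
namespace XBaux
variable {n : ℕ}

/-- shift of an index, skipping `m` -/
def shiftF (m : Fin n) (i : Fin n) (h : (i : ℕ) ≠ n - 1) : Fin n :=
  if (i : ℕ) < (m : ℕ) then i else ⟨(i : ℕ) + 1, by have := i.isLt; have := m.isLt; omega⟩

lemma shiftF_val (m i : Fin n) (h : (i : ℕ) ≠ n - 1) :
    ((shiftF m i h : Fin n) : ℕ) = if (i : ℕ) < (m : ℕ) then (i : ℕ) else (i : ℕ) + 1 := by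
  rw [shiftF]; split <;> rfl

lemma shiftF_ne (m i : Fin n) (h : (i : ℕ) ≠ n - 1) : shiftF m i h ≠ m := by
  intro hc
  have := congrArg Fin.val hc
  rw [shiftF_val] at this
  simp at this
  split at this <;> omega

lemma shiftF_inj {m : Fin n} {i j : Fin n} {hi : (i : ℕ) ≠ n - 1} {hj : (j : ℕ) ≠ n - 1}
    (h : shiftF m i hi = shiftF m j hj) : i = j := by
  have := congrArg Fin.val h
  rw [shiftF_val, shiftF_val] at this
  simp at this
  apply Fin.ext
  split at this <;> split at this <;> omega

/-- the underlying function of the coset representative `u_a` -/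
def uf (a : Fin n ⊕ Fin n) : Fin n ⊕ Fin n → Fin n ⊕ Fin n
  | Sum.inl i => if h : (i : ℕ) = n - 1 then a else Sum.inl (shiftF (babs a) i h)
  | Sum.inr i => if h : (i : ℕ) = n - 1 then a.swap else Sum.inr (shiftF (babs a) i h)

lemma uf_swap (a x : Fin n ⊕ Fin n) : uf a x.swap = (uf a x).swap := by
  cases x <;> (simp only [Sum.swap_inl, Sum.swap_inr, uf]; split <;> simp)

lemma babs_uf_ne (a : Fin n ⊕ Fin n) (i : Fin n) (h : (i : ℕ) ≠ n - 1) :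
    babs (uf a (Sum.inl i)) ≠ babs a ∧ babs (uf a (Sum.inr i)) ≠ babs a := by
  simp only [uf, dif_neg h, babs, Sum.elim_inl, Sum.elim_inr, id]
  exact ⟨shiftF_ne _ _ h, shiftF_ne _ _ h⟩

lemma uf_injective (a : Fin n ⊕ Fin n) : Function.Injective (uf a) := by
  have key : ∀ i : Fin n, ∀ h : (i : ℕ) ≠ n - 1, shiftF (babs a) i h ≠ babs a :=
    fun i h => shiftF_ne _ _ _
  intro x y hxy
  cases x with
  | inl i => cases y with
    | inl j =>
      simp only [uf] at hxy
      split at hxy <;> split at hxy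
      · rename_i h1 h2; exact congrArg Sum.inl (Fin.ext (by omega))
      · rename_i h1 h2
        exfalso; apply key j h2
        have : babs a = babs (Sum.inl (shiftF (babs a) j h2)) := congrArg babs hxy
        simpa [babs] using this.symm
      · rename_i h1 h2
        exfalso; apply key i h1
        have : babs (Sum.inl (shiftF (babs a) i h1)) = babs a := congrArg babs hxy
        simpa [babs] using this
      · rename_i h1 h2
        simp only [Sum.inl.injEq] at hxy
        exact congrArg Sum.inl (shiftF_inj hxy)
    | inr j =>
      simp only [uf] at hxy
      split at hxy <;> split at hxy
      · rename_i h1 h2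
        exfalso
        cases a <;> simp at hxy
      · rename_i h1 h2
        exfalso; apply key j h2
        have : babs a = babs (Sum.inr (shiftF (babs a) j h2)) := congrArg babs hxy
        simpa [babs] using this.symm
      · rename_i h1 h2
        exfalso; apply key i h1
        have : babs (Sum.inl (shiftF (babs a) i h1)) = babs a.swap := congrArg babs hxy
        rw [babs_swap] at this
        simpa [babs] using this
      · simp at hxy
  | inr i => cases y with
    | inl j =>
      simp only [uf] at hxy
      split at hxy <;> split at hxy
      · rename_i h1 h2
        exfalso
        cases a <;> simp at hxy
      · rename_i h1 h2
        exfalso; apply key j h2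
        have : babs a.swap = babs (Sum.inl (shiftF (babs a) j h2)) := congrArg babs hxy
        rw [babs_swap] at this
        simpa [babs] using this.symm
      · rename_i h1 h2
        exfalso; apply key i h1
        have : babs (Sum.inr (shiftF (babs a) i h1)) = babs a := congrArg babs hxy
        simpa [babs] using this
      · simp at hxy
    | inr j =>
      simp only [uf] at hxy
      split at hxy <;> split at hxy
      · rename_i h1 h2
        exact congrArg Sum.inr (Fin.ext (by omega))
      · rename_i h1 h2
        exfalso; apply key j h2
        have : babs a.swap = babs (Sum.inr (shiftF (babs a) j h2)) := congrArg babs hxy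
        rw [babs_swap] at this
        simpa [babs] using this.symm
      · rename_i h1 h2
        exfalso; apply key i h1
        have : babs (Sum.inr (shiftF (babs a) i h1)) = babs a.swap := congrArg babs hxy
        rw [babs_swap] at this
        simpa [babs] using this
      · simp only [Sum.inr.injEq] at hxy
        exact congrArg Sum.inr (shiftF_inj hxy)

/-- the coset representative `u_a` as a permutation -/
noncomputable def ua (a : Fin n ⊕ Fin n) : Equiv.Perm (Fin n ⊕ Fin n) :=
  Equiv.ofBijective (uf a) (Finite.injective_iff_bijective.mp (uf_injective a))

lemma ua_apply (a x : Fin n ⊕ Fin n) : ua a x = uf a x := rfl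

lemma ua_mem (a : Fin n ⊕ Fin n) : ua a ∈ Bgroup n := by
  intro x
  rw [ua_apply, ua_apply]
  exact uf_swap a x

end XBaux
namespace XBaux
variable {n : ℕ}

/-- the order-embedding on values induced by `u_a` away from the last slot -/
def psi (m : ℕ) (t : ℤ) : ℤ :=
  if (m : ℤ) < t then t + 1 else if t < -(m : ℤ) then t - 1 else t

lemma psi_lt_psi {m : ℕ} {s t : ℤ} : psi m s < psi m t ↔ s < t := by
  unfold psi
  split <;> split <;> omega

lemma psi_pos {m : ℕ} {t : ℤ} : 0 < psi m t ↔ 0 < t := by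
  unfold psi
  split
  · omega
  · split <;> omega

lemma ua_last_inl (a : Fin n ⊕ Fin n) {i : Fin n} (h : (i : ℕ) = n - 1) :
    ua a (Sum.inl i) = a := by
  rw [ua_apply]
  simp only [uf, dif_pos h]

lemma ua_last_inr (a : Fin n ⊕ Fin n) {i : Fin n} (h : (i : ℕ) = n - 1) :
    ua a (Sum.inr i) = a.swap := by
  rw [ua_apply]
  simp only [uf, dif_pos h]

lemma bval_ua (a : Fin n ⊕ Fin n) (x : Fin n ⊕ Fin n) (h : (babs x : ℕ) ≠ n - 1) :
    bval n (ua a x) = psi (babs a : ℕ) (bval n x) := by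
  cases x with
  | inl i =>
    have h' : (i : ℕ) ≠ n - 1 := by simpa [babs] using h
    rw [ua_apply]
    simp only [uf, dif_neg h']
    have hs := shiftF_val (babs a) i h'
    have hm := (babs a).isLt
    simp only [bval, Sum.elim_inl, psi]
    split at hs
    all_goals split_ifs
    all_goals try split
    all_goals omega
  | inr i =>
    have h' : (i : ℕ) ≠ n - 1 := by simpa [babs] using h
    rw [ua_apply]
    simp only [uf, dif_neg h']
    have hs := shiftF_val (babs a) i h'
    have hm := (babs a).isLt
    simp only [bval, Sum.elim_inr, psi]
    split at hs
    all_goals split_ifs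
    all_goals try split
    all_goals omega

lemma babs_ua_ne (a : Fin n ⊕ Fin n) (x : Fin n ⊕ Fin n) (h : (babs x : ℕ) ≠ n - 1) :
    babs (ua a x) ≠ babs a := by
  cases x with
  | inl i =>
    have h' : (i : ℕ) ≠ n - 1 := by simpa [babs] using h
    exact (babs_uf_ne a i h').1
  | inr i =>
    have h' : (i : ℕ) ≠ n - 1 := by simpa [babs] using h
    exact (babs_uf_ne a i h').2

/-- `u_a` satisfies the chain condition of length `n-1` -/
lemma cnd_ua (a : Fin n ⊕ Fin n) : cnd n (n - 1) (ua a) := by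
  rw [cnd_iff]
  intro i hi
  have hin : i < n := by omega
  have hin1 : i + 1 < n ∨ ¬ (i + 1 < n) := em _
  rw [bvalOf_succ _ hin]
  have hne : ((babs (Sum.inl (⟨i, hin⟩ : Fin n)) : Fin n) : ℕ) ≠ n - 1 := by
    simp [babs]; omega
  rw [bval_ua a _ hne]
  rcases Nat.eq_zero_or_pos i with h0 | h0
  · subst h0
    rw [bvalOf_zero]
    rw [psi_pos]
    simp [bval]
  · have hi1 : i - 1 < n := by omega
    have e : bvalOf n (ua a) i = bval n (ua a (Sum.inl ⟨i - 1, hi1⟩)) := by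
      rw [← bvalOf_succ _ hi1]
      congr 1
      omega
    rw [e]
    have hne' : ((babs (Sum.inl (⟨i - 1, hi1⟩ : Fin n)) : Fin n) : ℕ) ≠ n - 1 := by
      simp [babs]; omega
    rw [bval_ua a _ hne']
    rw [psi_lt_psi]
    simp [bval]
    omega

end XBaux
namespace XBaux
variable {n : ℕ}

lemma eq_ua {w : Equiv.Perm (Fin n ⊕ Fin n)} (hw : w ∈ Bgroup n) (hn : 1 ≤ n)
    (hc : cnd n (n - 1) w) :
    w = ua (w (Sum.inl ⟨n - 1, by omega⟩)) := by
  set a : Fin n ⊕ Fin n := w (Sum.inl ⟨n - 1, by omega⟩) with ha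
  set m : ℕ := (babs a : ℕ) with hm
  have hmn : m < n := (babs a).isLt
  set V : ℕ → ℤ := fun i => bvalOf n w (i + 1) with hV
  have hVval : ∀ i : ℕ, (h : i < n) → V i = bval n (w (Sum.inl ⟨i, h⟩)) := by
    intro i h
    rw [hV]
    exact bvalOf_succ w h
  -- lower bound
  have hL : ∀ i : ℕ, i < n - 1 → (i : ℤ) + 1 ≤ V i := by
    intro i
    induction i with
    | zero =>
      intro h
      have h0 : 0 < V 0 := cnd_pos hc (i := 1) (by omega) (by omega)
      omega
    | succ l ih =>
      intro h
      have h1 := ih (by omega)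
      have h2 : V l < V (l + 1) := cnd_chain hc (l + 1) (l + 2) (by omega) (by omega)
      push_cast
      omega
  -- upper bound
  have hUaux : ∀ d : ℕ, d < n - 1 → V (n - 2 - d) ≤ (n : ℤ) - d := by
    intro d
    induction d with
    | zero =>
      intro h
      have h2 : n - 2 < n := by omega
      have hb := (bval_le (w (Sum.inl ⟨n - 2, h2⟩))).1
      rw [← hVval _ h2] at hb
      simpa using hb
    | succ l ih =>
      intro h
      have h1 := ih (by omega)
      have he : n - 2 - (l + 1) + 1 = n - 2 - l := by omega
      have h2 : V (n - 2 - (l + 1)) < V (n - 2 - l) := by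
        have h3 := cnd_chain hc (n - 2 - (l + 1) + 1) (n - 2 - l + 1) (by omega) (by omega)
        exact h3
      push_cast
      omega
  have hU : ∀ i : ℕ, i < n - 1 → V i ≤ (i : ℤ) + 2 := by
    intro i h
    have := hUaux (n - 2 - i) (by omega)
    have he : n - 2 - (n - 2 - i) = i := by omega
    rw [he] at this
    have hcast : ((n - 2 - i : ℕ) : ℤ) = (n : ℤ) - 2 - i := by omega
    omega
  -- avoid m + 1
  have hne : ∀ i : ℕ, i < n - 1 → V i ≠ (m : ℤ) + 1 := by
    intro i h hcon
    have hiltn : i < n := by omega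
    rw [hVval _ hiltn] at hcon
    have h1 : (bval n (w (Sum.inl ⟨i, hiltn⟩))).natAbs = m + 1 := by omega
    rw [natAbs_bval] at h1
    have h2 : babs (w (Sum.inl ⟨i, hiltn⟩)) = babs a := by
      apply Fin.ext
      rw [hm] at h1
      omega
    have := babs_w_injective hw h2
    simp only [Fin.mk.injEq] at this
    omega
  -- monotonicity of the defect
  have hD : ∀ i l : ℕ, i ≤ l → l < n - 1 → V i - i ≤ V l - l := by
    intro i l hil
    induction l with
    | zero =>
      intro _
      have : i = 0 := by omega
      subst this
      omega
    | succ p ih =>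
      intro h
      rcases Nat.lt_or_ge i (p + 1) with h' | h'
      · have h1 := ih (by omega) (by omega)
        have h2 : V p < V (p + 1) := cnd_chain hc (p + 1) (p + 2) (by omega) (by omega)
        push_cast
        omega
      · have : i = p + 1 := by omega
        subst this
        omega
  -- the value of V
  have hVfinal : ∀ i : ℕ, i < n - 1 → V i = if i < m then (i : ℤ) + 1 else (i : ℤ) + 2 := by
    intro i h
    have hl := hL i h
    have hu := hU i h
    have hne' := hne i h
    split
    · rename_i him
      by_contra hcon
      have hVi : V i = (i : ℤ) + 2 := by omega
      have hml : m - 1 < n - 1 := by omega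
      have := hD i (m - 1) (by omega) hml
      have hum := hU (m - 1) hml
      have hnem := hne (m - 1) hml
      have hcast : ((m - 1 : ℕ) : ℤ) = (m : ℤ) - 1 := by omega
      omega
    · rename_i him
      by_contra hcon
      have hVi : V i = (i : ℤ) + 1 := by omega
      have hmlt : m < n - 1 := by omega
      have := hD m i (by omega) h
      have hlm := hL m hmlt
      have hnem := hne m hmlt
      omega
  -- conclude
  apply Equiv.ext
  have key : ∀ i : Fin n, w (Sum.inl i) = ua a (Sum.inl i) := by
    intro i
    by_cases hi : (i : ℕ) = n - 1
    · rw [ua_last_inl a hi, ha]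
      congr 1
      congr 1
      exact Fin.ext hi
    · apply bval_injective
      have h1 : bval n (w (Sum.inl i)) = V (i : ℕ) := by
        rw [hVval _ i.isLt]
      have h2 : bval n (ua a (Sum.inl i)) = psi m (bval n (Sum.inl i)) := by
        apply bval_ua
        simpa [babs] using hi
      rw [h1, h2, hVfinal _ (by have := i.isLt; omega)]
      have : bval n (Sum.inl i) = (i : ℤ) + 1 := rfl
      rw [this, psi]
      split <;> split
      all_goals try omega
      all_goals (split <;> omega)
  intro x
  cases x with
  | inl i => exact key i
  | inr i =>
    have e1 : w (Sum.inr i) = (w (Sum.inl i)).swap := hw (Sum.inl i)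
    have e2 : ua a (Sum.inr i) = (ua a (Sum.inl i)).swap := ua_mem a (Sum.inl i)
    rw [e1, e2, key i]

end XBaux
namespace XBaux
variable {n : ℕ}

lemma bvalOf_eq (w : Equiv.Perm (Fin n ⊕ Fin n)) {i : ℕ} (h1 : 1 ≤ i) (h2 : i ≤ n) :
    bvalOf n w i = bval n (w (Sum.inl ⟨i - 1, by omega⟩)) := dif_pos ⟨h1, h2⟩

lemma bvalOf_natAbs_inj {w : Equiv.Perm (Fin n ⊕ Fin n)} (hw : w ∈ Bgroup n) {i i' : ℕ}
    (h1 : 1 ≤ i) (h2 : i ≤ n) (h3 : 1 ≤ i') (h4 : i' ≤ n)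
    (h : (bvalOf n w i).natAbs = (bvalOf n w i').natAbs) : i = i' := by
  rw [bvalOf_eq w h1 h2, bvalOf_eq w h3 h4, natAbs_bval, natAbs_bval] at h
  have he : babs (w (Sum.inl ⟨i - 1, by omega⟩)) = babs (w (Sum.inl ⟨i' - 1, by omega⟩)) :=
    Fin.ext (by omega)
  have h5 := babs_w_injective hw he
  simp only [Sum.inl.injEq, Fin.mk.injEq] at h5
  omega

set_option maxHeartbeats 2000000 in
lemma main_class (hn : 1 ≤ n) {j : ℕ} (hj1 : 1 ≤ j) (hjn : j ≤ n)
    (a : Fin n ⊕ Fin n) {v : Equiv.Perm (Fin n ⊕ Fin n)} (hv : v ∈ Bgroup n) :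
    cnd n j v ↔
      ((cnd n j (ua a * v) ∧ ∀ i : ℕ, 1 ≤ i → i ≤ j →
          (bval n a).natAbs ≠ (bvalOf n (ua a * v) i).natAbs) ∨
       (cnd n (j - 1) (ua a * v) ∧ bval n a = bvalOf n (ua a * v) j)) := by
  set w := ua a * v with hwdef
  have hw : w ∈ Bgroup n := mul_mem (ua_mem a) hv
  set y : ℕ → Fin n ⊕ Fin n :=
    fun i => v (Sum.inl ⟨(i - 1) % n, Nat.mod_lt _ (by omega)⟩) with hy
  have hyv : ∀ i : ℕ, 1 ≤ i → i ≤ n → bvalOf n v i = bval n (y i) := by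
    intro i h1 h2
    rw [bvalOf, dif_pos ⟨h1, h2⟩, hy]
    have e : (⟨i - 1, by omega⟩ : Fin n) = ⟨(i - 1) % n, Nat.mod_lt _ (by omega)⟩ :=
      Fin.ext (Nat.mod_eq_of_lt (by omega)).symm
    rw [e]
  have hyw : ∀ i : ℕ, 1 ≤ i → i ≤ n → bvalOf n w i = bval n (ua a (y i)) := by
    intro i h1 h2
    rw [bvalOf, dif_pos ⟨h1, h2⟩, hwdef, Equiv.Perm.mul_apply, hy]
    have e : (⟨i - 1, by omega⟩ : Fin n) = ⟨(i - 1) % n, Nat.mod_lt _ (by omega)⟩ :=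
      Fin.ext (Nat.mod_eq_of_lt (by omega)).symm
    rw [e]
  have hyinj : ∀ i i' : ℕ, 1 ≤ i → i ≤ n → 1 ≤ i' → i' ≤ n → y i = y i' → i = i' := by
    intro i i' h1 h2 h3 h4 he
    rw [hy] at he
    simp only at he
    have h5 := v.injective he
    simp only [Sum.inl.injEq, Fin.mk.injEq] at h5
    rw [Nat.mod_eq_of_lt (by omega), Nat.mod_eq_of_lt (by omega)] at h5
    omega
  have hlast : ∀ x : Fin n ⊕ Fin n, (babs x : ℕ) = n - 1 →
      x = Sum.inl ⟨n - 1, by omega⟩ ∨ x = Sum.inr ⟨n - 1, by omega⟩ := by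
    rintro (i | i) h
    · left; exact congrArg Sum.inl (Fin.ext (by simpa [babs] using h))
    · right; exact congrArg Sum.inr (Fin.ext (by simpa [babs] using h))
  have hstep : ∀ i, 1 ≤ i → i ≤ n → (babs (y i) : ℕ) ≠ n - 1 →
      bvalOf n w i = psi ((babs a : Fin n) : ℕ) (bvalOf n v i) := by
    intro i h1 h2 h3
    rw [hyw i h1 h2, hyv i h1 h2, bval_ua a _ h3]
  have hbl : bval n (Sum.inl (⟨n - 1, by omega⟩ : Fin n)) = (n : ℤ) := by
    simp only [bval, Sum.elim_inl]
    push_cast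
    omega
  have hbr : bval n (Sum.inr (⟨n - 1, by omega⟩ : Fin n)) = -(n : ℤ) := by
    simp only [bval, Sum.elim_inr]
    push_cast
    omega
  have hlastval : ((⟨n - 1, by omega⟩ : Fin n) : ℕ) = n - 1 := rfl
  constructor
  · intro hcv
    by_cases hA : ∀ i, 1 ≤ i → i ≤ j → (babs (y i) : ℕ) ≠ n - 1
    · left
      constructor
      · rw [cnd_iff]
        intro i hi
        rcases Nat.eq_zero_or_pos i with h0 | h0
        · subst h0
          rw [bvalOf_zero,
            hstep 1 (by omega) (by omega) (hA 1 (by omega) (by omega)), psi_pos]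
          exact cnd_pos hcv (by omega) (by omega)
        · rw [hstep i (by omega) (by omega) (hA i (by omega) (by omega)),
            hstep (i + 1) (by omega) (by omega) (hA (i + 1) (by omega) (by omega)),
            psi_lt_psi]
          exact cnd_iff.mp hcv i hi
      · intro i h1 h2
        rw [hyw i h1 (by omega), natAbs_bval, natAbs_bval]
        have hne := babs_ua_ne a (y i) (hA i h1 h2)
        intro hcon
        apply hne
        apply Fin.ext
        omega
    · push_neg at hA
      obtain ⟨i0, h1, h2, h3⟩ := hA
      rcases hlast _ h3 with hx | hx
      · have hbv : bvalOf n v i0 = (n : ℤ) := by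
          rw [hyv i0 h1 (by omega), hx, hbl]
        have hij : j = i0 := by
          by_contra hne
          have := cnd_chain hcv i0 (i0 + 1) (by omega) (by omega)
          have hle : bvalOf n v (i0 + 1) ≤ (n : ℤ) := by
            rw [hyv (i0 + 1) (by omega) (by omega)]
            exact (bval_le _).1
          omega
        subst hij
        right
        have hgood : ∀ i, 1 ≤ i → i ≤ j - 1 → (babs (y i) : ℕ) ≠ n - 1 := by
          intro i hi1 hi2 hcon
          rcases hlast _ hcon with hx' | hx'
          · have : i = j :=
              hyinj i j (by omega) (by omega) (by omega) (by omega) (hx'.trans hx.symm)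
            omega
          · have hp : 0 < bvalOf n v i := cnd_pos hcv hi1 (by omega)
            rw [hyv i hi1 (by omega), hx', hbr] at hp
            omega
        constructor
        · rw [cnd_iff]
          intro i hi
          rcases Nat.eq_zero_or_pos i with h0 | h0
          · subst h0
            rw [bvalOf_zero,
              hstep 1 (by omega) (by omega) (hgood 1 (by omega) (by omega)), psi_pos]
            exact cnd_pos hcv (by omega) (by omega)
          · rw [hstep i (by omega) (by omega) (hgood i (by omega) (by omega)),
              hstep (i + 1) (by omega) (by omega) (hgood (i + 1) (by omega) (by omega)),
              psi_lt_psi]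
            exact cnd_iff.mp hcv i (by omega)
        · rw [hyw j (by omega) hjn, hx, ua_last_inl a hlastval]
      · exfalso
        have hp : 0 < bvalOf n v i0 := cnd_pos hcv h1 h2
        rw [hyv i0 h1 (by omega), hx, hbr] at hp
        omega
  · intro h
    rw [cnd_iff]
    rcases h with ⟨hcw, hQ⟩ | ⟨hcw, heq⟩
    · have hgood : ∀ i, 1 ≤ i → i ≤ j → (babs (y i) : ℕ) ≠ n - 1 := by
        intro i hi1 hi2 hcon
        apply hQ i hi1 hi2
        rcases hlast _ hcon with hx | hx
        · rw [hyw i hi1 (by omega), hx, ua_last_inl a hlastval]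
        · rw [hyw i hi1 (by omega), hx, ua_last_inr a hlastval, bval_swap, Int.natAbs_neg]
      intro i hi
      rcases Nat.eq_zero_or_pos i with h0 | h0
      · subst h0
        have hp := cnd_pos hcw (i := 1) (by omega) (by omega)
        rw [hstep 1 (by omega) (by omega) (hgood 1 (by omega) (by omega)), psi_pos] at hp
        rw [bvalOf_zero]
        exact hp
      · have hp := cnd_iff.mp hcw i hi
        rw [hstep i (by omega) (by omega) (hgood i (by omega) (by omega)),
          hstep (i + 1) (by omega) (by omega) (hgood (i + 1) (by omega) (by omega)),
          psi_lt_psi] at hp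
        exact hp
    · have hyj : y j = Sum.inl ⟨n - 1, by omega⟩ := by
        have h1 : bval n a = bval n (ua a (y j)) := by
          rw [← hyw j (by omega) hjn]; exact heq
        have h2 : a = ua a (y j) := bval_injective h1
        have h3 : ua a (Sum.inl ⟨n - 1, by omega⟩) = ua a (y j) := by
          rw [ua_last_inl a hlastval]; exact h2
        exact ((ua a).injective h3).symm
      have hgood : ∀ i, 1 ≤ i → i ≤ j - 1 → (babs (y i) : ℕ) ≠ n - 1 := by
        intro i hi1 hi2 hcon
        have hni : (bvalOf n w i).natAbs = (bval n a).natAbs := by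
          rcases hlast _ hcon with hx | hx
          · rw [hyw i hi1 (by omega), hx, ua_last_inl a hlastval]
          · rw [hyw i hi1 (by omega), hx, ua_last_inr a hlastval, bval_swap, Int.natAbs_neg]
        have hnj : (bvalOf n w j).natAbs = (bval n a).natAbs := by
          rw [hyw j (by omega) hjn, hyj, ua_last_inl a hlastval]
        have := bvalOf_natAbs_inj hw hi1 (by omega) (by omega) hjn (hni.trans hnj.symm)
        omega
      intro i hi
      by_cases hij : i + 1 = j
      · have hvj : bvalOf n v j = (n : ℤ) := by
          rw [hyv j (by omega) hjn, hyj, hbl]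
        rw [hij, hvj]
        rcases Nat.eq_zero_or_pos i with h0 | h0
        · subst h0
          rw [bvalOf_zero]
          omega
        · have hbn := bval_lt_of_babs_ne (y i) (hgood i (by omega) (by omega))
          rw [hyv i (by omega) (by omega)]
          exact hbn.1
      · rcases Nat.eq_zero_or_pos i with h0 | h0
        · subst h0
          have hp := cnd_pos hcw (i := 1) (by omega) (by omega)
          rw [hstep 1 (by omega) (by omega) (hgood 1 (by omega) (by omega)), psi_pos] at hp
          rw [bvalOf_zero]
          exact hp
        · have hp := cnd_iff.mp hcw i (by omega)
          rw [hstep i (by omega) (by omega) (hgood i (by omega) (by omega)),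
            hstep (i + 1) (by omega) (by omega) (hgood (i + 1) (by omega) (by omega)),
            psi_lt_psi] at hp
          exact hp

end XBaux
namespace XBaux
variable {n : ℕ}

lemma bvalOf_natAbs_bounds (w : Equiv.Perm (Fin n ⊕ Fin n)) {i : ℕ}
    (h1 : 1 ≤ i) (h2 : i ≤ n) :
    1 ≤ (bvalOf n w i).natAbs ∧ (bvalOf n w i).natAbs ≤ n := by
  rw [bvalOf_eq w h1 h2, natAbs_bval]
  have := (babs (w (Sum.inl ⟨i - 1, by omega⟩))).isLt
  omega

lemma count_Q (hn : 1 ≤ n) {j : ℕ} (hj1 : 1 ≤ j) (hjn : j ≤ n)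
    {w : Equiv.Perm (Fin n ⊕ Fin n)} (hw : w ∈ Bgroup n) :
    (Finset.univ.filter (fun a : Fin n ⊕ Fin n =>
      ∀ i : ℕ, 1 ≤ i → i ≤ j → (bval n a).natAbs ≠ (bvalOf n w i).natAbs)).card
      = 2 * (n - j) := by
  classical
  set q : ℕ → Prop := fun c => ∀ i : ℕ, 1 ≤ i → i ≤ j → c + 1 ≠ (bvalOf n w i).natAbs
    with hq
  have habs : ∀ a : Fin n ⊕ Fin n,
      (∀ i : ℕ, 1 ≤ i → i ≤ j → (bval n a).natAbs ≠ (bvalOf n w i).natAbs) ↔ q (babs a : ℕ) := by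
    intro a
    rw [hq]
    simp only [natAbs_bval]
  have hcount : ((Finset.range n).filter q).card = n - j := by
    have hneg : (Finset.range n).filter (fun c => ¬ q c)
        = (Finset.Icc 1 j).image (fun i => (bvalOf n w i).natAbs - 1) := by
      ext c
      simp only [Finset.mem_filter, Finset.mem_range, Finset.mem_image, Finset.mem_Icc, hq]
      push_neg
      constructor
      · rintro ⟨hc, i, hi1, hi2, hi3⟩
        exact ⟨i, ⟨hi1, hi2⟩, by omega⟩
      · rintro ⟨i, ⟨hi1, hi2⟩, hi3⟩
        have hb := bvalOf_natAbs_bounds w hi1 (by omega)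
        exact ⟨by omega, i, hi1, hi2, by omega⟩
    have hinj : Set.InjOn (fun i => (bvalOf n w i).natAbs - 1) (Finset.Icc 1 j) := by
      intro i hi i' hi' he
      simp only [Finset.coe_Icc, Set.mem_Icc] at hi hi'
      have hb := bvalOf_natAbs_bounds w hi.1 (by omega)
      have hb' := bvalOf_natAbs_bounds w hi'.1 (by omega)
      have : (bvalOf n w i).natAbs = (bvalOf n w i').natAbs := by
        simp only at he
        omega
      exact bvalOf_natAbs_inj hw hi.1 (by omega) hi'.1 (by omega) this
    have hcard : ((Finset.range n).filter (fun c => ¬ q c)).card = j := by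
      rw [hneg, Finset.card_image_of_injOn hinj]
      simp [Nat.card_Icc]
    have := Finset.card_filter_add_card_filter_not
      (s := Finset.range n) (p := q)
    rw [Finset.card_range] at this
    omega
  rw [Finset.card_filter]
  rw [Fintype.sum_sum_type]
  have e1 : ∀ m : Fin n, (if (∀ i : ℕ, 1 ≤ i → i ≤ j →
      (bval n (Sum.inl m : Fin n ⊕ Fin n)).natAbs ≠ (bvalOf n w i).natAbs) then 1 else 0)
      = (fun c => if q c then 1 else 0) ((m : ℕ)) := by
    intro m
    simp only [habs]
    rfl
  have e2 : ∀ m : Fin n, (if (∀ i : ℕ, 1 ≤ i → i ≤ j →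
      (bval n (Sum.inr m : Fin n ⊕ Fin n)).natAbs ≠ (bvalOf n w i).natAbs) then 1 else 0)
      = (fun c => if q c then 1 else 0) ((m : ℕ)) := by
    intro m
    simp only [habs]
    rfl
  calc (∑ m : Fin n, if (∀ i : ℕ, 1 ≤ i → i ≤ j →
          (bval n (Sum.inl m : Fin n ⊕ Fin n)).natAbs ≠ (bvalOf n w i).natAbs) then 1 else 0)
        + (∑ m : Fin n, if (∀ i : ℕ, 1 ≤ i → i ≤ j →
          (bval n (Sum.inr m : Fin n ⊕ Fin n)).natAbs ≠ (bvalOf n w i).natAbs) then 1 else 0)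
      = (∑ m : Fin n, (fun c => if q c then 1 else 0) ((m : ℕ)))
        + (∑ m : Fin n, (fun c => if q c then 1 else 0) ((m : ℕ))) := by
        rw [Finset.sum_congr rfl (fun m _ => e1 m), Finset.sum_congr rfl (fun m _ => e2 m)]
    _ = (∑ c ∈ Finset.range n, if q c then 1 else 0)
        + (∑ c ∈ Finset.range n, if q c then 1 else 0) := by
        rw [Fin.sum_univ_eq_sum_range (fun c => if q c then 1 else 0) n]
    _ = 2 * (n - j) := by
        rw [← Finset.card_filter, hcount]
        omega

end XBaux
namespace XBaux
variable {n : ℕ}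

lemma ite_or_add {M : Type*} [AddZeroClass M] {A B : Prop} (h : ¬(A ∧ B)) (x : M) :
    (if A ∨ B then x else 0) = (if A then x else 0) + (if B then x else 0) := by
  classical
  by_cases hA : A <;> by_cases hB : B <;> simp [hA, hB] <;> exact absurd ⟨hA, hB⟩ h

lemma filter_nm1_eq (hn : 1 ≤ n) :
    Finset.univ.filter (fun w : Bgroup n => cnd n (n - 1) (w : Equiv.Perm (Fin n ⊕ Fin n)))
      = Finset.univ.image (fun a : Fin n ⊕ Fin n => (⟨ua a, ua_mem a⟩ : Bgroup n)) := by
  ext w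
  simp only [Finset.mem_filter, Finset.mem_univ, true_and, Finset.mem_image]
  constructor
  · intro hc
    refine ⟨(w : Equiv.Perm (Fin n ⊕ Fin n)) (Sum.inl ⟨n - 1, by omega⟩), ?_⟩
    exact Subtype.ext (eq_ua w.2 hn hc).symm
  · rintro ⟨a, _, rfl⟩
    exact cnd_ua a

lemma xB_nm1 (hn : 1 ≤ n) :
    xB n (n - 1)
      = ∑ a : Fin n ⊕ Fin n, MonoidAlgebra.single (⟨ua a, ua_mem a⟩ : Bgroup n) (1 : ℚ) := by
  rw [xB_eq, filter_nm1_eq hn, Finset.sum_image]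
  intro a _ b _ h
  have h2 : ua a = ua b := congrArg Subtype.val h
  have h3 : ua a (Sum.inl ⟨n - 1, by omega⟩) = ua b (Sum.inl ⟨n - 1, by omega⟩) := by rw [h2]
  rwa [ua_last_inl a rfl, ua_last_inl b rfl] at h3

set_option maxHeartbeats 1000000 in
lemma xB_mul_general (hn : 1 ≤ n) {j : ℕ} (hj1 : 1 ≤ j) (hjn : j ≤ n) :
    xB n (n - 1) * xB n j = ((2 * (n - j) : ℕ) : ℚ) • xB n j + xB n (j - 1) := by
  classical
  rw [xB_nm1 hn, xB_eq n j, Finset.sum_mul_sum]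
  simp only [MonoidAlgebra.single_mul_single, one_mul]
  have hinner : ∀ a : Fin n ⊕ Fin n,
      (∑ v ∈ Finset.univ.filter (fun v : Bgroup n => cnd n j (v : Equiv.Perm (Fin n ⊕ Fin n))),
        MonoidAlgebra.single ((⟨ua a, ua_mem a⟩ : Bgroup n) * v) (1 : ℚ))
      = ∑ w : Bgroup n,
          if cnd n j ((((⟨ua a, ua_mem a⟩ : Bgroup n))⁻¹ * w : Bgroup n) : Equiv.Perm (Fin n ⊕ Fin n))
          then MonoidAlgebra.single w (1 : ℚ) else 0 := by
    intro a
    rw [Finset.sum_filter]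
    refine Fintype.sum_equiv (Equiv.mulLeft (⟨ua a, ua_mem a⟩ : Bgroup n)) _ _ (fun v => ?_)
    simp only [Equiv.coe_mulLeft]
    simp only [inv_mul_cancel_left]
  rw [Finset.sum_congr rfl (fun a _ => hinner a)]
  rw [Finset.sum_comm]
  have hclass : ∀ (a : Fin n ⊕ Fin n) (w : Bgroup n),
      cnd n j ((((⟨ua a, ua_mem a⟩ : Bgroup n))⁻¹ * w : Bgroup n) : Equiv.Perm (Fin n ⊕ Fin n))
      ↔ ((cnd n j (w : Equiv.Perm (Fin n ⊕ Fin n)) ∧ ∀ i : ℕ, 1 ≤ i → i ≤ j →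
            (bval n a).natAbs ≠ (bvalOf n (w : Equiv.Perm (Fin n ⊕ Fin n)) i).natAbs) ∨
         (cnd n (j - 1) (w : Equiv.Perm (Fin n ⊕ Fin n)) ∧
            bval n a = bvalOf n (w : Equiv.Perm (Fin n ⊕ Fin n)) j)) := by
    intro a w
    have hv : ((ua a)⁻¹ * (w : Equiv.Perm (Fin n ⊕ Fin n))) ∈ Bgroup n :=
      mul_mem (inv_mem (ua_mem a)) w.2
    have h := main_class hn hj1 hjn a hv
    rw [mul_inv_cancel_left] at h
    have hc : ((((⟨ua a, ua_mem a⟩ : Bgroup n))⁻¹ * w : Bgroup n) : Equiv.Perm (Fin n ⊕ Fin n))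
        = (ua a)⁻¹ * (w : Equiv.Perm (Fin n ⊕ Fin n)) := rfl
    rw [hc]
    exact h
  have hsum : ∀ w : Bgroup n,
      (∑ a : Fin n ⊕ Fin n,
        if cnd n j ((((⟨ua a, ua_mem a⟩ : Bgroup n))⁻¹ * w : Bgroup n) : Equiv.Perm (Fin n ⊕ Fin n))
        then MonoidAlgebra.single w (1 : ℚ) else 0)
      = (if cnd n j (w : Equiv.Perm (Fin n ⊕ Fin n))
          then (2 * (n - j)) • MonoidAlgebra.single w (1 : ℚ) else 0)
        + (if cnd n (j - 1) (w : Equiv.Perm (Fin n ⊕ Fin n))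
          then MonoidAlgebra.single w (1 : ℚ) else 0) := by
    intro w
    have hdisj : ∀ a : Fin n ⊕ Fin n,
        ¬ ((cnd n j (w : Equiv.Perm (Fin n ⊕ Fin n)) ∧ ∀ i : ℕ, 1 ≤ i → i ≤ j →
            (bval n a).natAbs ≠ (bvalOf n (w : Equiv.Perm (Fin n ⊕ Fin n)) i).natAbs) ∧
          (cnd n (j - 1) (w : Equiv.Perm (Fin n ⊕ Fin n)) ∧
            bval n a = bvalOf n (w : Equiv.Perm (Fin n ⊕ Fin n)) j)) := by
      rintro a ⟨⟨hc1, hQ⟩, hc2, heqv⟩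
      exact hQ j hj1 le_rfl (congrArg Int.natAbs heqv)
    have key : (∑ a : Fin n ⊕ Fin n,
        if cnd n j ((((⟨ua a, ua_mem a⟩ : Bgroup n))⁻¹ * w : Bgroup n) : Equiv.Perm (Fin n ⊕ Fin n))
        then MonoidAlgebra.single w (1 : ℚ) else 0)
        = ∑ a : Fin n ⊕ Fin n,
          ((if (cnd n j (w : Equiv.Perm (Fin n ⊕ Fin n)) ∧ ∀ i : ℕ, 1 ≤ i → i ≤ j →
              (bval n a).natAbs ≠ (bvalOf n (w : Equiv.Perm (Fin n ⊕ Fin n)) i).natAbs)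
            then MonoidAlgebra.single w (1 : ℚ) else 0)
          + (if (cnd n (j - 1) (w : Equiv.Perm (Fin n ⊕ Fin n)) ∧
              bval n a = bvalOf n (w : Equiv.Perm (Fin n ⊕ Fin n)) j)
            then MonoidAlgebra.single w (1 : ℚ) else 0)) := by
      refine Finset.sum_congr rfl (fun a _ => ?_)
      simp only [hclass a w]
      by_cases hA : cnd n j (w : Equiv.Perm (Fin n ⊕ Fin n)) ∧ ∀ i : ℕ, 1 ≤ i → i ≤ j →
          (bval n a).natAbs ≠ (bvalOf n (w : Equiv.Perm (Fin n ⊕ Fin n)) i).natAbs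
      · rw [if_pos (Or.inl hA), if_pos hA,
          if_neg (fun hB => hdisj a ⟨hA, hB⟩), add_zero]
      · by_cases hB : cnd n (j - 1) (w : Equiv.Perm (Fin n ⊕ Fin n)) ∧
            bval n a = bvalOf n (w : Equiv.Perm (Fin n ⊕ Fin n)) j
        · rw [if_pos (Or.inr hB), if_neg hA, if_pos hB, zero_add]
        · rw [if_neg (fun h => h.elim hA hB), if_neg hA, if_neg hB, add_zero]
    rw [key, Finset.sum_add_distrib]
    congr 1
    · by_cases hcw : cnd n j (w : Equiv.Perm (Fin n ⊕ Fin n))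
      · simp only [hcw, true_and, if_true]
        rw [← Finset.sum_filter, Finset.sum_const, count_Q hn hj1 hjn w.2]
      · simp only [hcw, false_and, if_false, Finset.sum_const_zero]
    · by_cases hcw : cnd n (j - 1) (w : Equiv.Perm (Fin n ⊕ Fin n))
      · simp only [hcw, true_and, if_true]
        have hcnd : ∀ a : Fin n ⊕ Fin n,
            (bval n a = bvalOf n (w : Equiv.Perm (Fin n ⊕ Fin n)) j)
            ↔ a = (w : Equiv.Perm (Fin n ⊕ Fin n)) (Sum.inl ⟨j - 1, by omega⟩) := by
          intro a
          rw [bvalOf_eq _ hj1 hjn]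
          exact ⟨fun h => bval_injective h, fun h => by rw [h]⟩
        have key2 : (∑ a : Fin n ⊕ Fin n,
            if bval n a = bvalOf n (w : Equiv.Perm (Fin n ⊕ Fin n)) j
            then MonoidAlgebra.single w (1 : ℚ) else 0)
            = ∑ a : Fin n ⊕ Fin n,
              if a = (w : Equiv.Perm (Fin n ⊕ Fin n)) (Sum.inl ⟨j - 1, by omega⟩)
              then MonoidAlgebra.single w (1 : ℚ) else 0 :=
          Finset.sum_congr rfl (fun a _ => by simp only [hcnd a])
        rw [key2, Finset.sum_ite_eq' Finset.univ _ (fun _ => MonoidAlgebra.single w (1 : ℚ))]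
        simp
      · simp only [hcw, false_and, if_false, Finset.sum_const_zero]
  rw [Finset.sum_congr rfl (fun w _ => hsum w)]
  rw [Finset.sum_add_distrib]
  congr 1
  · rw [← Finset.sum_filter, ← Finset.smul_sum, Nat.cast_smul_eq_nsmul]
  · rw [← Finset.sum_filter, xB_eq n (j - 1)]

lemma xB_mul_zero' (hn : 1 ≤ n) : xB n (n - 1) * xB n 0 = ((2 * n : ℕ) : ℚ) • xB n 0 := by
  classical
  have hF0 : Finset.univ.filter
      (fun w : Bgroup n => cnd n 0 (w : Equiv.Perm (Fin n ⊕ Fin n))) = Finset.univ := by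
    apply Finset.filter_true_of_mem
    intro w _
    exact cnd_zero _
  rw [xB_nm1 hn, xB_eq n 0, hF0, Finset.sum_mul_sum]
  simp only [MonoidAlgebra.single_mul_single, one_mul]
  have hinner : ∀ a : Fin n ⊕ Fin n,
      (∑ v : Bgroup n, MonoidAlgebra.single ((⟨ua a, ua_mem a⟩ : Bgroup n) * v) (1 : ℚ))
      = ∑ w : Bgroup n, MonoidAlgebra.single w (1 : ℚ) :=
    fun a => Fintype.sum_equiv (Equiv.mulLeft (⟨ua a, ua_mem a⟩ : Bgroup n)) _ _ (fun v => rfl)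
  rw [Finset.sum_congr rfl (fun a _ => hinner a), Finset.sum_const]
  have hcard : (Finset.univ : Finset (Fin n ⊕ Fin n)).card = 2 * n := by
    rw [Finset.card_univ]
    simp [Fintype.card_sum]
    omega
  rw [hcard, Nat.cast_smul_eq_nsmul]

end XBaux
/-- In `ℚ[B_n]`: for `0 ≤ k < n`, `x_{n-1} * x_{n-k} = 2k • x_{n-k} + x_{n-k-1}`, and
`x_{n-1} * x_0 = 2n • x_0`. -/
theorem xB_mul (n : ℕ) (hn : 1 ≤ n) :
    (∀ k, k < n →
        xB n (n - 1) * xB n (n - k) =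
          ((2 * k : ℕ) : ℚ) • xB n (n - k) + xB n (n - k - 1)) ∧
    xB n (n - 1) * xB n 0 = ((2 * n : ℕ) : ℚ) • xB n 0 := by
  constructor
  · intro k hk
    have hj1 : 1 ≤ n - k := by omega
    have hjn : n - k ≤ n := by omega
    have h := XBaux.xB_mul_general hn hj1 hjn
    have he : n - (n - k) = k := by omega
    rw [he] at h
    exact h
  · exact XBaux.xB_mul_zero' hn
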